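/- arXiv:2010.13419 — 5 statements merged into one kernel-verified Lean document; each statement's English description precedes it below -/
import Mathlib

section
/- Let R be a (not necessarily commutative) ring and n a natural number. Suppose N_r, D_r, N_l, D_l, X_l, Y_l, X_r, Y_r are n×n matrices over R satisfying the doubly coprime identity: X_l·N_r + Y_l·D_r = 1, X_l·Y_r − Y_l·X_r = 0, D_l·N_r − N_l·D_r = 0, and D_l·Y_r + N_l·X_r = 1. Then for every n×n matrix Q over R, the matrices D_cl := X_l − Q·D_l, N_cl := Y_l + Q·N_l, N_cr := Y_r + N_r·Q, D_cr := X_r − D_r·Q satisfy the doubly coprime identity of the compensated interconnection: D_cl·N_r + N_cl·D_r = 1, D_cl·N_cr − N_cl·D_cr = 0, D_l·N_r − N_l·D_r = 0, and D_l·N_cr + N_l·D_cr = 1. -/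
/-- Parametrization of stabilizing compensators: for any free parameter `Q`,
the compensator fractions built from a doubly coprime identity again satisfy the
doubly coprime identity of the compensated interconnection. -/
theorem stmt_0 {R : Type*} [Ring R] {n : ℕ}
    (Nr Dr Nl Dl Xl Yl Xr Yr : Matrix (Fin n) (Fin n) R)
    (h1 : Xl * Nr + Yl * Dr = 1)
    (h2 : Xl * Yr - Yl * Xr = 0)
    (h3 : Dl * Nr - Nl * Dr = 0)
    (h4 : Dl * Yr + Nl * Xr = 1)
    (Q : Matrix (Fin n) (Fin n) R) :
    (Xl - Q * Dl) * Nr + (Yl + Q * Nl) * Dr = 1 ∧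
    (Xl - Q * Dl) * (Yr + Nr * Q) - (Yl + Q * Nl) * (Xr - Dr * Q) = 0 ∧
    Dl * Nr - Nl * Dr = 0 ∧
    Dl * (Yr + Nr * Q) + Nl * (Xr - Dr * Q) = 1 := by
  refine ⟨?_, ?_, h3, ?_⟩
  · calc (Xl - Q * Dl) * Nr + (Yl + Q * Nl) * Dr
        = (Xl * Nr + Yl * Dr) - Q * (Dl * Nr - Nl * Dr) := by noncomm_ring
      _ = 1 := by rw [h1, h3]; simp
  · calc (Xl - Q * Dl) * (Yr + Nr * Q) - (Yl + Q * Nl) * (Xr - Dr * Q)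
        = (Xl * Yr - Yl * Xr) + (Xl * Nr + Yl * Dr) * Q
          - Q * (Dl * Yr + Nl * Xr) - Q * (Dl * Nr - Nl * Dr) * Q := by noncomm_ring
      _ = 0 := by rw [h1, h2, h3, h4]; simp
  · calc Dl * (Yr + Nr * Q) + Nl * (Xr - Dr * Q)
        = (Dl * Yr + Nl * Xr) + (Dl * Nr - Nl * Dr) * Q := by noncomm_ring
      _ = 1 := by rw [h3, h4]; simp
end

section
/- Let K be a field and n a natural number. Let N_r, D_r, N_cl, D_cl be invertible n×n matrices over K satisfying D_cl·N_r + N_cl·D_r = 1. Define H := N_r·D_r⁻¹ and H_c := D_cl⁻¹·N_cl. Then H and H_c are invertible, the matrix H⁻¹ + H_c⁻¹ is invertible, and (H⁻¹ + H_c⁻¹)⁻¹ = N_r·N_cl. Consequently, if S is a subring of K and every entry of N_r and of N_cl lies in S, then every entry of (H⁻¹ + H_c⁻¹)⁻¹ lies in S. -/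
open Matrix

/-- Sufficiency mechanism of Theorem 1: if `D_cl·N_r + N_cl·D_r = 1` with all four
matrices invertible, then the interconnection hybrid matrix
`(H⁻¹ + H_c⁻¹)⁻¹` equals `N_r·N_cl`; in particular its entries lie in any subring
containing the entries of `N_r` and `N_cl`. -/
theorem stmt_1 {K : Type*} [Field K] {n : ℕ}
    (Nr Dr Ncl Dcl : Matrix (Fin n) (Fin n) K)
    (hNr : IsUnit Nr) (hDr : IsUnit Dr) (hNcl : IsUnit Ncl) (hDcl : IsUnit Dcl)
    (hbez : Dcl * Nr + Ncl * Dr = 1) :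
    IsUnit (Nr * Dr⁻¹) ∧ IsUnit (Dcl⁻¹ * Ncl) ∧
    IsUnit ((Nr * Dr⁻¹)⁻¹ + (Dcl⁻¹ * Ncl)⁻¹) ∧
    ((Nr * Dr⁻¹)⁻¹ + (Dcl⁻¹ * Ncl)⁻¹)⁻¹ = Nr * Ncl ∧
    ∀ (S : Subring K),
      (∀ i j, Nr i j ∈ S) → (∀ i j, Ncl i j ∈ S) →
      ∀ i j, ((Nr * Dr⁻¹)⁻¹ + (Dcl⁻¹ * Ncl)⁻¹)⁻¹ i j ∈ S := by
  rw [Matrix.isUnit_iff_isUnit_det] at hNr hDr hNcl hDcl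
  have hH : IsUnit (Nr * Dr⁻¹) := by
    rw [Matrix.isUnit_iff_isUnit_det, Matrix.det_mul, Matrix.det_nonsing_inv]
    exact hNr.mul hDr.ringInverse
  have hHc : IsUnit (Dcl⁻¹ * Ncl) := by
    rw [Matrix.isUnit_iff_isUnit_det, Matrix.det_mul, Matrix.det_nonsing_inv]
    exact hDcl.ringInverse.mul hNcl
  have key : (Nr * Dr⁻¹)⁻¹ + (Dcl⁻¹ * Ncl)⁻¹ = Ncl⁻¹ * Nr⁻¹ := by
    rw [Matrix.mul_inv_rev, Matrix.mul_inv_rev,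
      Matrix.nonsing_inv_nonsing_inv _ hDr, Matrix.nonsing_inv_nonsing_inv _ hDcl]
    have : Ncl⁻¹ * Nr⁻¹ = Ncl⁻¹ * (Dcl * Nr + Ncl * Dr) * Nr⁻¹ := by
      rw [hbez, Matrix.mul_one]
    have h1 : Ncl⁻¹ * (Ncl * Dr) = Dr := by
      rw [← Matrix.mul_assoc, Matrix.nonsing_inv_mul _ hNcl, Matrix.one_mul]
    have h2 : Dcl * Nr * Nr⁻¹ = Dcl := by
      rw [Matrix.mul_assoc, Matrix.mul_nonsing_inv _ hNr, Matrix.mul_one]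
    rw [this, Matrix.mul_add, Matrix.add_mul, h1,
      Matrix.mul_assoc Ncl⁻¹ (Dcl * Nr) Nr⁻¹, h2, add_comm]
  have hkey2 : (Nr * Ncl)⁻¹ = Ncl⁻¹ * Nr⁻¹ := Matrix.mul_inv_rev _ _
  have hU : IsUnit (Nr * Ncl) := by
    rw [Matrix.isUnit_iff_isUnit_det, Matrix.det_mul]; exact hNr.mul hNcl
  have hsum : IsUnit ((Nr * Dr⁻¹)⁻¹ + (Dcl⁻¹ * Ncl)⁻¹) := by
    rw [key, ← hkey2]
    rw [Matrix.isUnit_iff_isUnit_det, Matrix.det_nonsing_inv]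
    rw [Matrix.isUnit_iff_isUnit_det] at hU
    exact hU.ringInverse
  have hfinal : ((Nr * Dr⁻¹)⁻¹ + (Dcl⁻¹ * Ncl)⁻¹)⁻¹ = Nr * Ncl := by
    rw [key, ← hkey2, Matrix.nonsing_inv_nonsing_inv]
    rwa [Matrix.isUnit_iff_isUnit_det] at hU
  refine ⟨hH, hHc, hsum, hfinal, fun S hS1 hS2 i j => ?_⟩
  rw [hfinal, Matrix.mul_apply]
  exact Subring.sum_mem _ fun k _ => S.mul_mem (hS1 i k) (hS2 k j)
end

section
/- Let K be a field and n a natural number. Suppose N_r, D_r, N_l, D_l, X_l, Y_l, X_r, Y_r are n×n matrices over K satisfying the doubly coprime identity: X_l·N_r + Y_l·D_r = 1, X_l·Y_r − Y_l·X_r = 0, D_l·N_r − N_l·D_r = 0, and D_l·Y_r + N_l·X_r = 1. Let Q be any n×n matrix over K such that X_l − Q·D_l and X_r − D_r·Q are invertible. Then (X_l − Q·D_l)⁻¹·(Y_l + Q·N_l) = (Y_r + N_r·Q)·(X_r − D_r·Q)⁻¹. -/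
open Matrix

/-- The two alternative formulae for the stabilizing compensator agree:
`(X_l − Q·D_l)⁻¹·(Y_l + Q·N_l) = (Y_r + N_r·Q)·(X_r − D_r·Q)⁻¹`. -/
theorem stmt_2 {K : Type*} [Field K] {n : ℕ}
    (Nr Dr Nl Dl Xl Yl Xr Yr : Matrix (Fin n) (Fin n) K)
    (h1 : Xl * Nr + Yl * Dr = 1)
    (h2 : Xl * Yr - Yl * Xr = 0)
    (h3 : Dl * Nr - Nl * Dr = 0)
    (h4 : Dl * Yr + Nl * Xr = 1)
    (Q : Matrix (Fin n) (Fin n) K)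
    (hl : IsUnit (Xl - Q * Dl)) (hr : IsUnit (Xr - Dr * Q)) :
    (Xl - Q * Dl)⁻¹ * (Yl + Q * Nl) = (Yr + Nr * Q) * (Xr - Dr * Q)⁻¹ := by
  have e2 : Xl * Yr = Yl * Xr := sub_eq_zero.mp h2
  have e3 : Dl * Nr = Nl * Dr := sub_eq_zero.mp h3
  have e1 : Xl * Nr = 1 - Yl * Dr := eq_sub_of_add_eq h1
  have e4 : Dl * Yr = 1 - Nl * Xr := eq_sub_of_add_eq h4
  have key : (Xl - Q * Dl) * (Yr + Nr * Q) = (Yl + Q * Nl) * (Xr - Dr * Q) := by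
    calc (Xl - Q * Dl) * (Yr + Nr * Q)
        = Xl * Yr + (Xl * Nr) * Q - Q * (Dl * Yr) - Q * (Dl * Nr) * Q := by noncomm_ring
      _ = Yl * Xr + (1 - Yl * Dr) * Q - Q * (1 - Nl * Xr) - Q * (Nl * Dr) * Q := by
          rw [e1, e2, e3, e4]
      _ = (Yl + Q * Nl) * (Xr - Dr * Q) := by noncomm_ring
  calc (Xl - Q * Dl)⁻¹ * (Yl + Q * Nl)
      = (Xl - Q * Dl)⁻¹ * ((Yl + Q * Nl) * (Xr - Dr * Q)) * (Xr - Dr * Q)⁻¹ := by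
        rw [Matrix.mul_assoc ((Xl - Q * Dl)⁻¹), Matrix.mul_assoc (Yl + Q * Nl), Matrix.mul_nonsing_inv _ ((Matrix.isUnit_iff_isUnit_det _).mp hr),
          Matrix.mul_one]
    _ = (Xl - Q * Dl)⁻¹ * (Xl - Q * Dl) * ((Yr + Nr * Q) * (Xr - Dr * Q)⁻¹) := by
        rw [← key]; noncomm_ring
    _ = (Yr + Nr * Q) * (Xr - Dr * Q)⁻¹ := by
        rw [Matrix.nonsing_inv_mul _ ((Matrix.isUnit_iff_isUnit_det _).mp hl), Matrix.one_mul]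
end

section
/- In RatFunc ℝ with variable X, define the perturbed impedance Z̃ := (1.05·(X + 0.9268)·(X − 0.5579)) / ((X + 1.171)·(X − 0.2951)) and the compensator impedance Z_c := (−1.0732·(X + 3.455)·(X + 1)) / ((X + 1.231)·(X + 3.387)), where all decimal coefficients are exact rational numbers. Then Z̃ + Z_c ≠ 0, so the interconnected impedance Z_T := (Z̃⁻¹ + Z_c⁻¹)⁻¹ is a well-defined element of RatFunc ℝ, and Z_T is stable: every complex root z of the denominator of Z_T (in reduced form, coefficients embedded into ℂ) satisfies Re z < 0. -/
open Polynomial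

/-- Perturbed impedance (+5% on all parameters). -/
noncomputable def Ztilde : RatFunc ℝ :=
  RatFunc.mk (C (1.05 : ℝ) * (X + C (0.9268 : ℝ)) * (X - C (0.5579 : ℝ)))
    ((X + C (1.171 : ℝ)) * (X - C (0.2951 : ℝ)))

/-- Robustly stabilizing compensator impedance. -/
noncomputable def Zc : RatFunc ℝ :=
  RatFunc.mk (C (-1.0732 : ℝ) * (X + C (3.455 : ℝ)) * (X + C (1 : ℝ)))
    ((X + C (1.231 : ℝ)) * (X + C (3.387 : ℝ)))

noncomputable def PN1 : Polynomial ℝ :=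
  C (1.05 : ℝ) * (X + C (0.9268 : ℝ)) * (X - C (0.5579 : ℝ))
noncomputable def PD1 : Polynomial ℝ :=
  (X + C (1.171 : ℝ)) * (X - C (0.2951 : ℝ))
noncomputable def PN2 : Polynomial ℝ :=
  C (-1.0732 : ℝ) * (X + C (3.455 : ℝ)) * (X + C (1 : ℝ))
noncomputable def PD2 : Polynomial ℝ :=
  (X + C (1.231 : ℝ)) * (X + C (3.387 : ℝ))
noncomputable def pden : Polynomial ℝ := PN1 * PD2 + PN2 * PD1

lemma ne_zero_of_eval_ne {p : Polynomial ℝ} {a : ℝ} (h : p.eval a ≠ 0) : p ≠ 0 :=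
  fun hp => h (by simp [hp])

lemma hPN1 : PN1 ≠ 0 := by
  apply ne_zero_of_eval_ne (a := 0)
  simp only [PN1, eval_mul, eval_add, eval_sub, eval_X, eval_C]
  norm_num

lemma hPD1 : PD1 ≠ 0 := by
  apply ne_zero_of_eval_ne (a := 0)
  simp only [PD1, eval_mul, eval_add, eval_sub, eval_X, eval_C]
  norm_num

lemma hPN2 : PN2 ≠ 0 := by
  apply ne_zero_of_eval_ne (a := 0)
  simp only [PN2, eval_mul, eval_add, eval_sub, eval_X, eval_C]
  norm_num

lemma hPD2 : PD2 ≠ 0 := by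
  apply ne_zero_of_eval_ne (a := 0)
  simp only [PD2, eval_mul, eval_add, eval_sub, eval_X, eval_C]
  norm_num

lemma hpden_ne : pden ≠ 0 := by
  apply ne_zero_of_eval_ne (a := 0)
  simp only [pden, PN1, PN2, PD1, PD2, eval_mul, eval_add, eval_sub, eval_X, eval_C]
  norm_num

lemma hpden_deg_le : pden.natDegree ≤ 4 := by
  unfold pden PN1 PN2 PD1 PD2
  compute_degree

/-- Evaluations of `pden` at sample points, with known signs. -/
lemma heval17 : pden.eval (-17) < 0 := by
  simp only [pden, PN1, PN2, PD1, PD2, eval_mul, eval_add, eval_sub, eval_X, eval_C]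
  norm_num

lemma heval3 : 0 < pden.eval (-3) := by
  simp only [pden, PN1, PN2, PD1, PD2, eval_mul, eval_add, eval_sub, eval_X, eval_C]
  norm_num

lemma heval2 : pden.eval (-2) < 0 := by
  simp only [pden, PN1, PN2, PD1, PD2, eval_mul, eval_add, eval_sub, eval_X, eval_C]
  norm_num

lemma heval1 : 0 < pden.eval (-1) := by
  simp only [pden, PN1, PN2, PD1, PD2, eval_mul, eval_add, eval_sub, eval_X, eval_C]
  norm_num

lemma heval0 : pden.eval 0 < 0 := by
  simp only [pden, PN1, PN2, PD1, PD2, eval_mul, eval_add, eval_sub, eval_X, eval_C]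
  norm_num

lemma root_in_Ioo_up {a b : ℝ} (hab : a ≤ b) (ha : pden.eval a < 0) (hb : 0 < pden.eval b) :
    ∃ r ∈ Set.Ioo a b, pden.eval r = 0 := by
  have hc : ContinuousOn (fun x => pden.eval x) (Set.Icc a b) :=
    (Polynomial.continuous pden).continuousOn
  have h0 : (0 : ℝ) ∈ Set.Ioo (pden.eval a) (pden.eval b) := ⟨ha, hb⟩
  obtain ⟨r, hr, hr0⟩ := intermediate_value_Ioo hab hc h0
  exact ⟨r, hr, hr0⟩

lemma root_in_Ioo_down {a b : ℝ} (hab : a ≤ b) (ha : 0 < pden.eval a) (hb : pden.eval b < 0) :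
    ∃ r ∈ Set.Ioo a b, pden.eval r = 0 := by
  have hc : ContinuousOn (fun x => pden.eval x) (Set.Icc a b) :=
    (Polynomial.continuous pden).continuousOn
  have h0 : (0 : ℝ) ∈ Set.Ioo (pden.eval b) (pden.eval a) := ⟨hb, ha⟩
  obtain ⟨r, hr, hr0⟩ := intermediate_value_Ioo' hab hc h0
  exact ⟨r, hr, hr0⟩

/-- The key structural fact: `pden` splits over `ℝ` and all its (real) roots
are negative. -/
lemma pden_splits_and_neg :
    pden.Splits ∧ ∀ r ∈ pden.roots, r < 0 := by
  obtain ⟨r1, hr1m, hr1⟩ := root_in_Ioo_up (by norm_num : (-17:ℝ) ≤ -3) heval17 heval3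
  obtain ⟨r2, hr2m, hr2⟩ := root_in_Ioo_down (by norm_num : (-3:ℝ) ≤ -2) heval3 heval2
  obtain ⟨r3, hr3m, hr3⟩ := root_in_Ioo_up (by norm_num : (-2:ℝ) ≤ -1) heval2 heval1
  obtain ⟨r4, hr4m, hr4⟩ := root_in_Ioo_down (by norm_num : (-1:ℝ) ≤ 0) heval1 heval0
  obtain ⟨_, h1b⟩ := hr1m
  obtain ⟨h2a, h2b⟩ := hr2m
  obtain ⟨h3a, h3b⟩ := hr3m
  obtain ⟨h4a, h4b⟩ := hr4m
  have h12 : r1 ≠ r2 := by intro h; rw [h] at h1b; linarith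
  have h13 : r1 ≠ r3 := by intro h; rw [h] at h1b; linarith
  have h14 : r1 ≠ r4 := by intro h; rw [h] at h1b; linarith
  have h23 : r2 ≠ r3 := by intro h; rw [h] at h2b; linarith
  have h24 : r2 ≠ r4 := by intro h; rw [h] at h2b; linarith
  have h34 : r3 ≠ r4 := by intro h; rw [h] at h3b; linarith
  have hnodup : ({r1, r2, r3, r4} : Multiset ℝ).Nodup := by
    simp only [Multiset.insert_eq_cons, Multiset.nodup_cons, Multiset.mem_cons,
      Multiset.mem_singleton, Multiset.nodup_singleton, and_true, not_or]
    exact ⟨⟨h12, h13, h14⟩, ⟨h23, h24⟩, h34⟩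
  have hsub : ({r1, r2, r3, r4} : Multiset ℝ) ⊆ pden.roots := by
    intro a ha
    simp only [Multiset.insert_eq_cons, Multiset.mem_cons, Multiset.mem_singleton] at ha
    rcases ha with h | h | h | h <;> subst h <;>
      exact Polynomial.mem_roots'.mpr ⟨hpden_ne, by assumption⟩
  have hle : ({r1, r2, r3, r4} : Multiset ℝ) ≤ pden.roots :=
    (Multiset.le_iff_subset hnodup).mpr hsub
  have hcardm : Multiset.card ({r1, r2, r3, r4} : Multiset ℝ) = 4 := by
    simp [Multiset.insert_eq_cons]
  have h4le : 4 ≤ Multiset.card pden.roots := by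
    rw [← hcardm]; exact Multiset.card_le_card hle
  have hcards : Multiset.card pden.roots = pden.natDegree :=
    le_antisymm (Polynomial.card_roots' pden) (le_trans hpden_deg_le h4le)
  have hroots_eq : ({r1, r2, r3, r4} : Multiset ℝ) = pden.roots := by
    apply Multiset.eq_of_le_of_card_le hle
    rw [hcardm]
    exact le_trans (Polynomial.card_roots' pden) hpden_deg_le
  refine ⟨Polynomial.splits_iff_card_roots.mpr hcards, ?_⟩
  intro r hr
  rw [← hroots_eq] at hr
  simp only [Multiset.insert_eq_cons, Multiset.mem_cons, Multiset.mem_singleton] at hr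
  rcases hr with h | h | h | h <;> subst h <;> linarith

/-- The interconnected impedance `Z_T = (Z̃⁻¹ + Z_c⁻¹)⁻¹` is well defined and
stable: every complex root of its denominator has negative real part. -/
theorem stmt_6 :
    Ztilde + Zc ≠ 0 ∧
    ∀ z : ℂ, (((Ztilde⁻¹ + Zc⁻¹)⁻¹).denom.map (algebraMap ℝ ℂ)).eval z = 0 →
      z.re < 0 := by
  have hZt : Ztilde = RatFunc.mk PN1 PD1 := rfl
  have hZc : Zc = RatFunc.mk PN2 PD2 := rfl
  have hA : ∀ q : Polynomial ℝ, q ≠ 0 → algebraMap (Polynomial ℝ) (RatFunc ℝ) q ≠ 0 :=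
    fun q hq => RatFunc.algebraMap_ne_zero hq
  have hAN1 := hA PN1 hPN1
  have hAN2 := hA PN2 hPN2
  have hAD1 := hA PD1 hPD1
  have hAD2 := hA PD2 hPD2
  have hAp := hA pden hpden_ne
  constructor
  · have key : Ztilde + Zc =
        algebraMap (Polynomial ℝ) (RatFunc ℝ) pden /
          algebraMap (Polynomial ℝ) (RatFunc ℝ) (PD1 * PD2) := by
      rw [hZt, hZc, RatFunc.mk_eq_div, RatFunc.mk_eq_div]
      unfold pden
      simp only [map_add, map_mul]
      rw [div_add_div _ _ hAD1 hAD2]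
      congr 1
      ring
    rw [key]
    exact div_ne_zero hAp (hA _ (mul_ne_zero hPD1 hPD2))
  · have hZT : (Ztilde⁻¹ + Zc⁻¹)⁻¹ =
        algebraMap (Polynomial ℝ) (RatFunc ℝ) (PN1 * PN2) /
          algebraMap (Polynomial ℝ) (RatFunc ℝ) pden := by
      rw [hZt, hZc, RatFunc.mk_eq_div, RatFunc.mk_eq_div]
      unfold pden
      simp only [map_add, map_mul]
      rw [inv_div, inv_div, div_add_div _ _ hAN1 hAN2, inv_div]
      congr 1
      ring
    have hdvd : ((Ztilde⁻¹ + Zc⁻¹)⁻¹).denom ∣ pden :=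
      (RatFunc.denom_dvd hpden_ne).mpr ⟨PN1 * PN2, hZT⟩
    intro z hz
    obtain ⟨hsplits, hneg⟩ := pden_splits_and_neg
    have hdvd2 : ((Ztilde⁻¹ + Zc⁻¹)⁻¹).denom.map (algebraMap ℝ ℂ) ∣
        pden.map (algebraMap ℝ ℂ) := Polynomial.map_dvd _ hdvd
    have hz2 : (pden.map (algebraMap ℝ ℂ)).eval z = 0 := by
      obtain ⟨t, ht⟩ := hdvd2
      rw [ht, eval_mul, hz, zero_mul]
    have hmapne : pden.map (algebraMap ℝ ℂ) ≠ 0 :=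
      (Polynomial.map_ne_zero_iff (algebraMap ℝ ℂ).injective).mpr hpden_ne
    have hzr : z ∈ (pden.map (algebraMap ℝ ℂ)).roots :=
      Polynomial.mem_roots'.mpr ⟨hmapne, hz2⟩
    rw [Polynomial.Splits.roots_map hsplits (algebraMap ℝ ℂ)] at hzr
    obtain ⟨r, hrmem, hrz⟩ := Multiset.mem_map.mp hzr
    have hr0 : r < 0 := hneg r hrmem
    have : z.re = r := by
      rw [← hrz]
      simp [Complex.ofReal_re, RCLike.algebraMap_eq_ofReal]
    rw [this]
    exact hr0
end

section
/- Let p, q, m be natural numbers, let F be a p×m complex matrix, G a q×m complex matrix, β a positive real number, and let H be an invertible m×m complex matrix with Hᴴ·H = β²·1 − Gᴴ·G. Denote by ‖·‖ the L2 operator norm and by [F; G] the (p+q)×m matrix obtained by vertically stacking F on top of G. If ‖[F; G]‖ < β, then ‖G‖ < β and ‖F·H⁻¹‖ < 1. Conversely, if ‖G‖ < β and ‖F·H⁻¹‖ < 1, then ‖[F; G]‖ ≤ β. -/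
open Matrix
open scoped Matrix.Norms.L2Operator

noncomputable def nsq {ι : Type*} [Fintype ι] (w : ι → ℂ) : ℝ := ∑ i, ‖w i‖ ^ 2

lemma nsq_nonneg {ι : Type*} [Fintype ι] (w : ι → ℂ) : 0 ≤ nsq w :=
  Finset.sum_nonneg fun _ _ => sq_nonneg _

lemma nsq_eq {ι : Type*} [Fintype ι] (w : ι → ℂ) : (nsq w : ℂ) = star w ⬝ᵥ w := by
  simp only [nsq, dotProduct, Pi.star_apply, Complex.ofReal_sum]
  refine Finset.sum_congr rfl fun i _ => ?_
  rw [Complex.star_def, ← Complex.normSq_eq_conj_mul_self, Complex.normSq_eq_norm_sq,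
    Complex.ofReal_pow]

lemma euc_norm_eq {ι : Type*} [Fintype ι] (w : ι → ℂ) :
    ‖(EuclideanSpace.equiv ι ℂ).symm w‖ = Real.sqrt (nsq w) := by
  rw [EuclideanSpace.norm_eq]
  rfl

lemma euc_norm_sq {ι : Type*} [Fintype ι] (w : ι → ℂ) :
    ‖(EuclideanSpace.equiv ι ℂ).symm w‖ ^ 2 = nsq w := by
  rw [euc_norm_eq, Real.sq_sqrt (nsq_nonneg w)]

lemma opnorm_le_of {ι κ : Type*} [Fintype ι] [Fintype κ] [DecidableEq ι]
    (A : Matrix κ ι ℂ) {C : ℝ} (hC : 0 ≤ C)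
    (h : ∀ w : ι → ℂ, ‖(EuclideanSpace.equiv κ ℂ).symm (A *ᵥ w)‖ ≤
      C * ‖(EuclideanSpace.equiv ι ℂ).symm w‖) : ‖A‖ ≤ C := by
  rw [Matrix.l2_opNorm_def]
  refine ContinuousLinearMap.opNorm_le_bound _ hC fun x => ?_
  exact h ((EuclideanSpace.equiv ι ℂ) x)

lemma spec_key {ι κ : Type*} [Fintype ι] [Fintype κ] [DecidableEq ι]
    (B : Matrix ι ι ℂ) (G : Matrix κ ι ℂ) (β : ℝ)
    (hfac : Bᴴ * B = (β ^ 2 : ℂ) • (1 : Matrix ι ι ℂ) - Gᴴ * G) (v : ι → ℂ) :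
    nsq (B *ᵥ v) = β ^ 2 * nsq v - nsq (G *ᵥ v) := by
  have h : (nsq (B *ᵥ v) : ℂ) = (β ^ 2 : ℂ) * nsq v - nsq (G *ᵥ v) := by
    rw [nsq_eq, Matrix.star_mulVec, Matrix.dotProduct_mulVec, Matrix.vecMul_vecMul, hfac,
      nsq_eq, nsq_eq, Matrix.star_mulVec]
    rw [← Matrix.dotProduct_mulVec, ← Matrix.dotProduct_mulVec]
    simp [Matrix.sub_mulVec, Matrix.smul_mulVec, Matrix.one_mulVec, dotProduct_sub,
      dotProduct_smul, smul_eq_mul]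
  exact_mod_cast h

lemma nsq_fromRows {ι κ₁ κ₂ : Type*} [Fintype ι] [Fintype κ₁] [Fintype κ₂]
    (A : Matrix κ₁ ι ℂ) (B : Matrix κ₂ ι ℂ) (v : ι → ℂ) :
    nsq (Matrix.fromRows A B *ᵥ v) = nsq (A *ᵥ v) + nsq (B *ᵥ v) := by
  rw [Matrix.fromRows_mulVec]
  simp [nsq, Fintype.sum_sum_type]

lemma le_of_sq_le_sq' {a b : ℝ} (ha : 0 ≤ a) (hb : 0 ≤ b) (h : a ^ 2 ≤ b ^ 2) : a ≤ b := by
  nlinarith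

/-- Pointwise content of Francis' Lemma 2: with `H` an invertible spectral factor
of `β²·1 − Gᴴ·G`, the bound `‖[F; G]‖ < β` is equivalent (up to the boundary)
to the pair of bounds `‖G‖ < β` and `‖F·H⁻¹‖ < 1`. -/
theorem stmt_9 (p q m : ℕ) (F : Matrix (Fin p) (Fin m) ℂ)
    (G : Matrix (Fin q) (Fin m) ℂ) (β : ℝ) (hβ : 0 < β)
    (H : Matrix (Fin m) (Fin m) ℂ) (hH : IsUnit H)
    (hfac : Hᴴ * H = (β ^ 2 : ℂ) • (1 : Matrix (Fin m) (Fin m) ℂ) - Gᴴ * G) :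
    (‖Matrix.fromRows F G‖ < β → ‖G‖ < β ∧ ‖F * H⁻¹‖ < 1) ∧
    (‖G‖ < β → ‖F * H⁻¹‖ < 1 → ‖Matrix.fromRows F G‖ ≤ β) := by
  have hHdet : IsUnit H.det := (Matrix.isUnit_iff_isUnit_det H).mp hH
  have hHinv : H * H⁻¹ = 1 := Matrix.mul_nonsing_inv H hHdet
  have hinvH : H⁻¹ * H = 1 := Matrix.nonsing_inv_mul H hHdet
  have key := spec_key H G β hfac
  constructor
  · intro hlt
    set c := ‖Matrix.fromRows F G‖ with hc
    have hc0 : 0 ≤ c := norm_nonneg _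
    have hfr : ∀ w : Fin m → ℂ, nsq (F *ᵥ w) + nsq (G *ᵥ w) ≤ c ^ 2 * nsq w := by
      intro w
      have h1 : ‖(EuclideanSpace.equiv (Fin p ⊕ Fin q) ℂ).symm (Matrix.fromRows F G *ᵥ w)‖ ≤
          c * ‖(EuclideanSpace.equiv (Fin m) ℂ).symm w‖ :=
        Matrix.l2_opNorm_mulVec _ _
      have h2 := euc_norm_sq (Matrix.fromRows F G *ᵥ w)
      have h3 := euc_norm_sq w
      have h4 := nsq_fromRows F G w
      have h5 : (0:ℝ) ≤ ‖(EuclideanSpace.equiv (Fin p ⊕ Fin q) ℂ).symm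
          (Matrix.fromRows F G *ᵥ w)‖ := norm_nonneg _
      have h6 : (0:ℝ) ≤ ‖(EuclideanSpace.equiv (Fin m) ℂ).symm w‖ := norm_nonneg _
      nlinarith [h1, h2, h3, h4, h5, h6]
    constructor
    · refine lt_of_le_of_lt ?_ hlt
      refine opnorm_le_of _ hc0 fun w => ?_
      refine le_of_sq_le_sq' (norm_nonneg _) (mul_nonneg hc0 (norm_nonneg _)) ?_
      rw [mul_pow, euc_norm_sq, euc_norm_sq]
      have := hfr w
      have := nsq_nonneg (F *ᵥ w)
      linarith
    · have hFH : ‖F * H⁻¹‖ ≤ c / β := by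
        refine opnorm_le_of _ (div_nonneg hc0 hβ.le) fun y => ?_
        set x := H⁻¹ *ᵥ y with hx
        have hHx : H *ᵥ x = y := by
          rw [hx, Matrix.mulVec_mulVec, hHinv, Matrix.one_mulVec]
        have hFx : (F * H⁻¹) *ᵥ y = F *ᵥ x := by
          rw [hx, Matrix.mulVec_mulVec]
        refine le_of_sq_le_sq' (norm_nonneg _)
          (mul_nonneg (div_nonneg hc0 hβ.le) (norm_nonneg _)) ?_
        rw [mul_pow, div_pow, euc_norm_sq, euc_norm_sq, hFx]
        rw [div_mul_eq_mul_div, le_div_iff₀ (by positivity)]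
        have k1 : nsq y = β ^ 2 * nsq x - nsq (G *ᵥ x) := by rw [← hHx, key]
        have k2 := hfr x
        have k3 := nsq_nonneg (G *ᵥ x)
        have k4 := nsq_nonneg x
        have e : 0 ≤ (β ^ 2 - c ^ 2) * nsq (G *ᵥ x) :=
          mul_nonneg (by nlinarith) k3
        have k5 : nsq (F *ᵥ x) * β ^ 2 ≤ (c ^ 2 * nsq x - nsq (G *ᵥ x)) * β ^ 2 :=
          mul_le_mul_of_nonneg_right (by linarith) (sq_nonneg β)
        nlinarith [e, k5]
      calc ‖F * H⁻¹‖ ≤ c / β := hFH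
        _ < 1 := (div_lt_one hβ).mpr hlt
  · intro _ hFH
    refine opnorm_le_of _ hβ.le fun w => ?_
    have h1 : ‖(EuclideanSpace.equiv (Fin p) ℂ).symm ((F * H⁻¹) *ᵥ (H *ᵥ w))‖ ≤
        ‖F * H⁻¹‖ * ‖(EuclideanSpace.equiv (Fin m) ℂ).symm (H *ᵥ w)‖ :=
      Matrix.l2_opNorm_mulVec _ ((EuclideanSpace.equiv (Fin m) ℂ).symm (H *ᵥ w))
    have h2 : (F * H⁻¹) *ᵥ (H *ᵥ w) = F *ᵥ w := by
      rw [Matrix.mulVec_mulVec, Matrix.mul_assoc, hinvH, Matrix.mul_one]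
    rw [h2] at h1
    refine le_of_sq_le_sq' (norm_nonneg _) (mul_nonneg hβ.le (norm_nonneg _)) ?_
    rw [mul_pow, euc_norm_sq, euc_norm_sq, nsq_fromRows]
    have h3 : nsq (F *ᵥ w) ≤ nsq (H *ᵥ w) := by
      have e1 := euc_norm_sq (F *ᵥ w)
      have e2 := euc_norm_sq (H *ᵥ w)
      have h4 : (0:ℝ) ≤ ‖(EuclideanSpace.equiv (Fin p) ℂ).symm (F *ᵥ w)‖ := norm_nonneg _
      have h5 : (0:ℝ) ≤ ‖(EuclideanSpace.equiv (Fin m) ℂ).symm (H *ᵥ w)‖ := norm_nonneg _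
      have h6 : (0:ℝ) ≤ ‖F * H⁻¹‖ := norm_nonneg _
      have h7 : ‖(EuclideanSpace.equiv (Fin p) ℂ).symm (F *ᵥ w)‖ ≤
          ‖(EuclideanSpace.equiv (Fin m) ℂ).symm (H *ᵥ w)‖ :=
        le_trans h1 (mul_le_of_le_one_left h5 hFH.le)
      calc nsq (F *ᵥ w) = _ ^ 2 := e1.symm
        _ ≤ _ ^ 2 := pow_le_pow_left₀ h4 h7 2
        _ = nsq (H *ᵥ w) := e2
    have := key w
    have := nsq_nonneg (G *ᵥ w)
    linarith
end
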